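/- Ehrling's lemma: Let X, Y, Z be normed spaces with a compact linear embedding X ↪ Y and a continuous injective linear embedding Y ↪ Z. Then for every ε > 0 there exists C(ε) > 0 such that ‖x‖_Y ≤ ε‖x‖_X + C(ε)‖x‖_Z for all x ∈ X. -/

import Mathlib

open Filter Topology

/-- Ehrling's lemma. If `i : X → Y` is a compact (continuous linear, injective)
embedding and `j : Y → Z` a continuous injective linear embedding, then for every `ε > 0`
there is `C(ε) > 0` with `‖i x‖ ≤ ε ‖x‖ + C(ε) ‖j (i x)‖` for all `x ∈ X`. -/
theorem stmt12 {X Y Z : Type*}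
    [NormedAddCommGroup X] [NormedSpace ℝ X]
    [NormedAddCommGroup Y] [NormedSpace ℝ Y]
    [NormedAddCommGroup Z] [NormedSpace ℝ Z]
    (i : X →L[ℝ] Y) (j : Y →L[ℝ] Z)
    (hi_compact : IsCompactOperator i) (hi_inj : Function.Injective i)
    (hj_inj : Function.Injective j) :
    ∀ ε > 0, ∃ C > 0, ∀ x : X, ‖i x‖ ≤ ε * ‖x‖ + C * ‖j (i x)‖ := by
  intro ε hε
  by_contra h
  push_neg at h
  have key : ∀ n : ℕ, ∃ u : X, ‖i u‖ = 1 ∧ ε * ‖u‖ < 1 ∧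
      ((n : ℝ) + 1) * ‖j (i u)‖ < 1 := by
    intro n
    obtain ⟨x, hx⟩ := h ((n : ℝ) + 1) (by positivity)
    have hix : i x ≠ 0 := by
      intro h0
      rw [h0] at hx
      simp only [norm_zero, map_zero, mul_zero, add_zero] at hx
      nlinarith [norm_nonneg x, mul_nonneg hε.le (norm_nonneg x)]
    have ht : (0:ℝ) < ‖i x‖ := norm_pos_iff.mpr hix
    refine ⟨‖i x‖⁻¹ • x, ?_, ?_, ?_⟩
    · rw [map_smul, norm_smul, norm_inv, norm_norm, inv_mul_cancel₀ ht.ne']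
    · rw [norm_smul, norm_inv, norm_norm]
      have h1 : ((n:ℝ)+1) * ‖j (i x)‖ ≥ 0 := by positivity
      calc ε * (‖i x‖⁻¹ * ‖x‖) = (ε * ‖x‖) / ‖i x‖ := by ring
        _ < 1 := by rw [div_lt_one ht]; linarith
    · rw [map_smul, map_smul, norm_smul, norm_inv, norm_norm]
      have h1 : ε * ‖x‖ ≥ 0 := by positivity
      calc ((n:ℝ)+1) * (‖i x‖⁻¹ * ‖j (i x)‖)
          = (((n:ℝ)+1) * ‖j (i x)‖) / ‖i x‖ := by ring
        _ < 1 := by rw [div_lt_one ht]; linarith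
  choose u hu1 hu2 hu3 using key
  obtain ⟨K, hK, hKmem⟩ := hi_compact
  obtain ⟨r, hr, hball⟩ := Metric.mem_nhds_iff.mp hKmem
  set c : ℝ := ε * r with hc
  have hcpos : 0 < c := mul_pos hε hr
  set v : ℕ → Y := fun n => c • i (u n) with hv
  have hvK : ∀ n, v n ∈ K := by
    intro n
    have hmem : c • u n ∈ Metric.ball (0 : X) r := by
      rw [Metric.mem_ball, dist_zero_right, norm_smul, Real.norm_eq_abs,
        abs_of_pos hcpos]
      have : ‖u n‖ < ε⁻¹ := by
        nlinarith [hu2 n, mul_inv_cancel₀ hε.ne', inv_pos.mpr hε]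
      calc c * ‖u n‖ < c * ε⁻¹ := by
            exact mul_lt_mul_of_pos_left this hcpos
        _ = r := by field_simp [hc]; exact hc
    have := hball hmem
    simpa [hv, map_smul] using this
  obtain ⟨y, hyK, φ, hφ, hconv⟩ := hK.tendsto_subseq hvK
  -- ‖y‖ = c
  have hnorm : ‖y‖ = c := by
    have h1 : Tendsto (fun n => ‖v (φ n)‖) atTop (𝓝 ‖y‖) := hconv.norm
    have h2 : (fun n => ‖v (φ n)‖) = fun _ => c := by
      funext n
      rw [hv]
      simp only [norm_smul, Real.norm_eq_abs, abs_of_pos hcpos, hu1, mul_one]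
    rw [h2] at h1
    exact (tendsto_nhds_unique tendsto_const_nhds h1).symm
  -- j y = 0
  have hjy : j y = 0 := by
    have h1 : Tendsto (fun n => j (v (φ n))) atTop (𝓝 (j y)) :=
      (j.continuous.tendsto y).comp hconv
    have h2 : Tendsto (fun n => j (v (φ n))) atTop (𝓝 0) := by
      rw [tendsto_zero_iff_norm_tendsto_zero]
      have hbound : ∀ n : ℕ, ‖j (v (φ n))‖ ≤ c / ((n:ℝ)+1) := by
        intro n
        have hb : ‖j (i (u (φ n)))‖ < 1 / ((φ n : ℝ) + 1) := by
          rw [lt_div_iff₀ (by positivity)]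
          linarith [hu3 (φ n)]
        have hφn : (n : ℝ) + 1 ≤ (φ n : ℝ) + 1 := by
          have h' := hφ.id_le n
          exact add_le_add_left (by exact_mod_cast h') 1
        calc ‖j (v (φ n))‖ = c * ‖j (i (u (φ n)))‖ := by
              rw [hv]; simp [map_smul, norm_smul, abs_of_pos hcpos]
          _ ≤ c * (1 / ((φ n : ℝ) + 1)) := by
              exact mul_le_mul_of_nonneg_left hb.le hcpos.le
          _ ≤ c / ((n:ℝ)+1) := by
              rw [mul_one_div, div_le_div_iff₀ (by positivity) (by positivity)]
              nlinarith
      have hg : Tendsto (fun n : ℕ => c / ((n:ℝ)+1)) atTop (𝓝 0) := by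
        have : Tendsto (fun n : ℕ => ((n:ℝ)+1)) atTop atTop :=
          tendsto_atTop_add_const_right _ 1 tendsto_natCast_atTop_atTop
        simpa using Tendsto.const_div_atTop this c
      exact squeeze_zero (fun n => norm_nonneg _) hbound hg
    exact tendsto_nhds_unique h1 h2
  have hy0 : y = 0 := hj_inj (by simpa using hjy)
  rw [hy0, norm_zero] at hnorm
  exact absurd hnorm.symm hcpos.ne'
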